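/- (Diverging-time protocol saturates the Landauer limit, Theorem 2.) Let d ≥ 1, ω : Fin d → ℝ, β > 0, and x_max ≥ 1. For x ∈ ℝ define Z(x) := ∑_k exp(−β x ω_k), p_k(x) := exp(−β x ω_k)/Z(x), and the Shannon entropy S(x) := −∑_k p_k(x) log p_k(x). For each integer N ≥ 1 set ε_N := (x_max − 1)/N, x_n := 1 + n ε_N for 0 ≤ n ≤ N, and define the total heat dissipated by the machines Q_N := ∑_{n=1}^{N} ∑_{k} x_n ω_k (p_k(x_{n−1}) − p_k(x_n)). Then lim_{N→∞} Q_N = (1/β)(S(1) − S(x_max)). -/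

import Mathlib

open Filter

/-- Partition function `Z(x) = ∑ₖ exp(−β x ωₖ)`. -/
noncomputable def Zfun (d : ℕ) (ω : Fin d → ℝ) (β x : ℝ) : ℝ :=
  ∑ k, Real.exp (-β * x * ω k)

/-- Gibbs populations `p_k(x) = exp(−β x ωₖ)/Z(x)`. -/
noncomputable def pfun (d : ℕ) (ω : Fin d → ℝ) (β x : ℝ) (k : Fin d) : ℝ :=
  Real.exp (-β * x * ω k) / Zfun d ω β x

/-- Shannon entropy `S(x) = −∑ₖ p_k(x) log p_k(x)`. -/
noncomputable def Sfun (d : ℕ) (ω : Fin d → ℝ) (β x : ℝ) : ℝ :=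
  -∑ k, pfun d ω β x k * Real.log (pfun d ω β x k)


noncomputable def Efun (d : ℕ) (ω : Fin d → ℝ) (β x : ℝ) : ℝ :=
  ∑ k, ω k * pfun d ω β x k

variable {d : ℕ} {ω : Fin d → ℝ} {β x : ℝ}

lemma Zpos (hd : 1 ≤ d) (ω : Fin d → ℝ) (β x : ℝ) : 0 < Zfun d ω β x := by
  have : Nonempty (Fin d) := Fin.pos_iff_nonempty.mp hd
  exact Finset.sum_pos (fun k _ => Real.exp_pos _) Finset.univ_nonempty

lemma contZ (d : ℕ) (ω : Fin d → ℝ) (β : ℝ) : Continuous (fun x => Zfun d ω β x) := by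
  unfold Zfun
  exact continuous_finset_sum _ fun k _ => (Real.continuous_exp.comp (by continuity))

lemma contE (hd : 1 ≤ d) (ω : Fin d → ℝ) (β : ℝ) : Continuous (fun x => Efun d ω β x) := by
  unfold Efun pfun
  refine continuous_finset_sum _ fun k _ => Continuous.mul continuous_const ?_
  exact ((Real.continuous_exp.comp (by continuity)).div (contZ d ω β))
    (fun x => (Zpos hd ω β x).ne')

lemma hasDerivZ (d : ℕ) (ω : Fin d → ℝ) (β x : ℝ) :
    HasDerivAt (fun x => Zfun d ω β x)
      (∑ k, (-β * ω k) * Real.exp (-β * x * ω k)) x := by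
  refine HasDerivAt.fun_sum fun k _ => ?_
  have h1 : HasDerivAt (fun x : ℝ => -β * x * ω k) (-β * ω k) x := by
    simpa using ((hasDerivAt_id x).const_mul (-β)).mul_const (ω k)
  simpa [mul_comm] using h1.exp

lemma sum_p (hd : 1 ≤ d) (ω : Fin d → ℝ) (β x : ℝ) : ∑ k, pfun d ω β x k = 1 := by
  unfold pfun
  rw [← Finset.sum_div]
  exact div_self (Zpos hd ω β x).ne'

lemma S_eq (hd : 1 ≤ d) (ω : Fin d → ℝ) (β x : ℝ) :
    Sfun d ω β x = β * x * Efun d ω β x + Real.log (Zfun d ω β x) := by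
  unfold Sfun Efun
  have hlog : ∀ k : Fin d, Real.log (pfun d ω β x k)
      = -β * x * ω k - Real.log (Zfun d ω β x) := by
    intro k
    unfold pfun
    rw [Real.log_div (Real.exp_ne_zero _) (Zpos hd ω β x).ne', Real.log_exp]
  calc -∑ k, pfun d ω β x k * Real.log (pfun d ω β x k)
      = ∑ k, (β * x * (ω k * pfun d ω β x k)
          + Real.log (Zfun d ω β x) * pfun d ω β x k) := by
        rw [← Finset.sum_neg_distrib]
        exact Finset.sum_congr rfl fun k _ => by rw [hlog k]; ring
    _ = _ := by
        rw [Finset.sum_add_distrib, ← Finset.mul_sum, ← Finset.mul_sum, sum_p hd,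
          mul_one]

lemma hasDerivF (hd : 1 ≤ d) (hβ : 0 < β) (x : ℝ) :
    HasDerivAt (fun x => -(1/β) * Real.log (Zfun d ω β x)) (Efun d ω β x) x := by
  have h := ((hasDerivZ d ω β x).log (Zpos hd ω β x).ne').const_mul (-(1/β))
  convert h using 1
  · rfl
  · rfl
  unfold Efun pfun
  rw [Finset.sum_div, Finset.mul_sum]
  refine Finset.sum_congr rfl fun k _ => ?_
  have h2 : -(1/β) * (-β * ω k * Real.exp (-β*x*ω k) / Zfun d ω β x)
      = (1/β * β) * (ω k * (Real.exp (-β*x*ω k) / Zfun d ω β x)) := by ring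
  rw [h2, one_div_mul_cancel hβ.ne', one_mul]

lemma integralE (hd : 1 ≤ d) (hβ : 0 < β) (hx : 1 ≤ xmax) :
    ∫ t in (1:ℝ)..xmax, Efun d ω β t
      = (1/β) * Real.log (Zfun d ω β 1) - (1/β) * Real.log (Zfun d ω β xmax) := by
  have := intervalIntegral.integral_eq_sub_of_hasDerivAt
    (f := fun x => -(1/β) * Real.log (Zfun d ω β x)) (a := (1:ℝ)) (b := xmax)
    (fun t _ => hasDerivF hd hβ t) ((contE hd ω β).intervalIntegrable _ _)
  rw [this]; ring

lemma innerQsum (hd : 1 ≤ d) (ω : Fin d → ℝ) (β : ℝ) (c a b : ℝ) :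
    ∑ k, c * ω k * (pfun d ω β a k - pfun d ω β b k)
      = c * (Efun d ω β a - Efun d ω β b) := by
  unfold Efun
  rw [mul_sub, Finset.mul_sum, Finset.mul_sum, ← Finset.sum_sub_distrib]
  exact Finset.sum_congr rfl fun k _ => by ring

lemma telescope (hd : 1 ≤ d) (ω : Fin d → ℝ) (β xmax : ℝ) (N : ℕ) (hN : 1 ≤ N) :
    (∑ n ∈ Finset.Icc 1 N, ∑ k,
        (1 + (n : ℝ) * ((xmax - 1) / N)) * ω k *
          (pfun d ω β (1 + ((n : ℝ) - 1) * ((xmax - 1) / N)) k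
            - pfun d ω β (1 + (n : ℝ) * ((xmax - 1) / N)) k))
      = Efun d ω β 1 - xmax * Efun d ω β xmax
        + ∑ i ∈ Finset.range N, ((xmax - 1) / N) * Efun d ω β (1 + (i : ℝ) * ((xmax - 1) / N)) := by
  set ε : ℝ := (xmax - 1) / N with hε
  have hNε : 1 + (N : ℝ) * ε = xmax := by
    rw [hε]
    have hN0 : (N : ℝ) ≠ 0 := Nat.cast_ne_zero.mpr (by omega)
    field_simp
    ring
  set f : ℕ → ℝ := fun i => (1 + (i : ℝ) * ε) * Efun d ω β (1 + (i : ℝ) * ε) with hf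
  have key : ∀ n ∈ Finset.Icc 1 N, (∑ k,
        (1 + (n : ℝ) * ε) * ω k *
          (pfun d ω β (1 + ((n : ℝ) - 1) * ε) k - pfun d ω β (1 + (n : ℝ) * ε) k))
      = (1 + (n : ℝ) * ε) * (Efun d ω β (1 + ((n : ℝ) - 1) * ε) - Efun d ω β (1 + (n : ℝ) * ε)) :=
    fun n _ => innerQsum hd ω β _ _ _
  rw [Finset.sum_congr rfl key, ← Finset.Ico_add_one_right_eq_Icc, Finset.sum_Ico_eq_sum_range]
  have key2 : ∀ i : ℕ, (1 + ((1 + i : ℕ) : ℝ) * ε) *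
        (Efun d ω β (1 + (((1 + i : ℕ) : ℝ) - 1) * ε) - Efun d ω β (1 + ((1 + i : ℕ) : ℝ) * ε))
      = (f i - f (i + 1)) + ε * Efun d ω β (1 + (i : ℝ) * ε) := by
    intro i
    have c1 : (((1 + i : ℕ) : ℝ) - 1) = (i : ℝ) := by push_cast; ring
    have c2 : ((1 + i : ℕ) : ℝ) = ((i + 1 : ℕ) : ℝ) := by push_cast; ring
    rw [c1, c2, hf]
    push_cast
    ring
  rw [Finset.sum_congr rfl (fun i _ => key2 i), Finset.sum_add_distrib]
  simp only [Nat.add_sub_cancel]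
  rw [Finset.sum_range_sub' f N, hf]
  simp only [Nat.cast_zero, zero_mul, add_zero, one_mul, Nat.cast_id]
  rw [hNε]

lemma riemann (hd : 1 ≤ d) (ω : Fin d → ℝ) (hβ : 0 < β) {xmax : ℝ} (hx : 1 ≤ xmax) :
    Tendsto (fun N : ℕ => ∑ i ∈ Finset.range N,
        ((xmax - 1) / N) * Efun d ω β (1 + (i : ℝ) * ((xmax - 1) / N)))
      atTop (nhds (∫ t in (1:ℝ)..xmax, Efun d ω β t)) := by
  have hE : Continuous (Efun d ω β) := contE hd ω β
  have huc : UniformContinuousOn (Efun d ω β) (Set.Icc 1 xmax) :=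
    (isCompact_Icc).uniformContinuousOn_of_continuous hE.continuousOn
  rw [Metric.tendsto_atTop]
  intro e he
  have hxm0 : (0:ℝ) < xmax := lt_of_lt_of_le one_pos hx
  have he' : 0 < e / (2 * xmax) := by positivity
  obtain ⟨δ, hδ, Hδ⟩ := Metric.uniformContinuousOn_iff_le.mp huc (e / (2 * xmax)) he'
  refine ⟨max 1 ⌈(xmax - 1) / δ⌉₊, fun N hN => ?_⟩
  have hN1 : 1 ≤ N := le_trans (le_max_left _ _) hN
  have hN0 : (0:ℝ) < N := by exact_mod_cast hN1
  set ε : ℝ := (xmax - 1) / N with hεdef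
  have hε0 : 0 ≤ ε := div_nonneg (by linarith) hN0.le
  have hεδ : ε ≤ δ := by
    have h1 : (xmax - 1) / δ ≤ N := by
      have := le_trans (le_max_right 1 ⌈(xmax - 1) / δ⌉₊) hN
      exact_mod_cast le_trans (Nat.le_ceil _) (Nat.cast_le.mpr this)
    rw [hεdef, div_le_iff₀ hN0]
    calc xmax - 1 = ((xmax - 1) / δ) * δ := by field_simp
      _ ≤ δ * (N : ℝ) := by rw [mul_comm δ _]; exact mul_le_mul_of_nonneg_right h1 hδ.le
  set a : ℕ → ℝ := fun i => 1 + (i : ℝ) * ε with ha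
  have haN : a N = xmax := by
    rw [ha]; simp only; rw [hεdef]; field_simp; ring
  have hmem : ∀ i : ℕ, i ≤ N → a i ∈ Set.Icc (1:ℝ) xmax := by
    intro i hi
    constructor
    · simp only [ha]; nlinarith [mul_nonneg (Nat.cast_nonneg (α := ℝ) i) hε0]
    · have : (i:ℝ) * ε ≤ (N:ℝ) * ε := by
        have : (i:ℝ) ≤ N := by exact_mod_cast hi
        nlinarith
      have hNε : (N:ℝ) * ε = xmax - 1 := by rw [hεdef]; field_simp
      simp only [ha]; linarith
  have hIsum : (∫ t in (1:ℝ)..xmax, Efun d ω β t)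
      = ∑ i ∈ Finset.range N, ∫ t in a i..a (i+1), Efun d ω β t := by
    rw [intervalIntegral.sum_integral_adjacent_intervals
      (fun k _ => hE.intervalIntegrable _ _)]
    have h0 : a 0 = 1 := by simp [ha]
    rw [h0, haN]
  have hterm : ∀ i : ℕ, ε * Efun d ω β (a i) = ∫ t in a i..a (i+1), Efun d ω β (a i) := by
    intro i
    rw [intervalIntegral.integral_const, smul_eq_mul]
    congr 1
    simp only [ha]; push_cast; ring
  have hdiff : (∑ i ∈ Finset.range N, ε * Efun d ω β (a i))
        - (∫ t in (1:ℝ)..xmax, Efun d ω β t)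
      = ∑ i ∈ Finset.range N, ∫ t in a i..a (i+1),
          (Efun d ω β (a i) - Efun d ω β t) := by
    rw [hIsum, ← Finset.sum_sub_distrib]
    refine Finset.sum_congr rfl fun i _ => ?_
    rw [hterm i, ← intervalIntegral.integral_sub
      (intervalIntegrable_const) (hE.intervalIntegrable _ _)]
  have hbound : ∀ i ∈ Finset.range N,
      |∫ t in a i..a (i+1), (Efun d ω β (a i) - Efun d ω β t)| ≤ (e / (2 * xmax)) * ε := by
    intro i hi
    rw [Finset.mem_range] at hi
    have hle : a i ≤ a (i+1) := by
      simp only [ha]; push_cast; nlinarith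
    have key : ∀ t ∈ Set.uIoc (a i) (a (i+1)),
        ‖Efun d ω β (a i) - Efun d ω β t‖ ≤ e / (2 * xmax) := by
      intro t ht
      rw [Set.uIoc_of_le hle] at ht
      have hai : a i ∈ Set.Icc (1:ℝ) xmax := hmem i (by omega)
      have hai1 : a (i+1) ∈ Set.Icc (1:ℝ) xmax := hmem (i+1) (by omega)
      have htmem : t ∈ Set.Icc (1:ℝ) xmax :=
        ⟨le_trans hai.1 ht.1.le, le_trans ht.2 hai1.2⟩
      have hdist : dist (a i) t ≤ δ := by
        rw [Real.dist_eq]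
        have h2 : a (i+1) - a i = ε := by simp only [ha]; push_cast; ring
        rw [abs_sub_comm, abs_of_nonneg (by linarith [ht.1.le] : (0:ℝ) ≤ t - a i)]
        have := ht.2
        linarith
      have := Hδ (a i) hai t htmem hdist
      rwa [Real.dist_eq] at this
    have := intervalIntegral.norm_integral_le_of_norm_le_const key
    rw [Real.norm_eq_abs] at this
    calc |∫ t in a i..a (i+1), (Efun d ω β (a i) - Efun d ω β t)|
        ≤ (e / (2 * xmax)) * |a (i+1) - a i| := this
      _ = (e / (2 * xmax)) * ε := by
          congr 1
          have h2 : a (i+1) - a i = ε := by simp only [ha]; push_cast; ring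
          rw [h2, abs_of_nonneg hε0]
  rw [Real.dist_eq, hdiff]
  calc |∑ i ∈ Finset.range N, ∫ t in a i..a (i+1), (Efun d ω β (a i) - Efun d ω β t)|
      ≤ ∑ i ∈ Finset.range N, |∫ t in a i..a (i+1), (Efun d ω β (a i) - Efun d ω β t)| :=
        Finset.abs_sum_le_sum_abs _ _
    _ ≤ ∑ _i ∈ Finset.range N, (e / (2 * xmax)) * ε :=
        Finset.sum_le_sum hbound
    _ = (e / (2 * xmax)) * (xmax - 1) := by
        rw [Finset.sum_const, Finset.card_range, nsmul_eq_mul, hεdef]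
        field_simp
    _ < e := by
        rw [div_mul_eq_mul_div, div_lt_iff₀ (by linarith : (0:ℝ) < 2 * xmax)]
        nlinarith


/-- Diverging-time protocol saturates the Landauer limit: the total heat
`Q_N` dissipated by the sequence of `N` machines with Hamiltonians `(1 + n ε_N)·H_S`
converges to `(1/β)(S(1) − S(x_max))` as `N → ∞`. -/
theorem diverging_time_landauer (d : ℕ) (hd : 1 ≤ d) (ω : Fin d → ℝ)
    (β : ℝ) (hβ : 0 < β) (xmax : ℝ) (hx : 1 ≤ xmax) :
    Tendsto (fun N : ℕ =>
        ∑ n ∈ Finset.Icc 1 N, ∑ k,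
          (1 + (n : ℝ) * ((xmax - 1) / N)) * ω k *
            (pfun d ω β (1 + ((n : ℝ) - 1) * ((xmax - 1) / N)) k
              - pfun d ω β (1 + (n : ℝ) * ((xmax - 1) / N)) k))
      atTop (nhds ((1 / β) * (Sfun d ω β 1 - Sfun d ω β xmax))) := by
  have hmain : Tendsto (fun N : ℕ => Efun d ω β 1 - xmax * Efun d ω β xmax
        + ∑ i ∈ Finset.range N, ((xmax - 1) / N) * Efun d ω β (1 + (i : ℝ) * ((xmax - 1) / N)))
      atTop (nhds (Efun d ω β 1 - xmax * Efun d ω β xmax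
        + ∫ t in (1:ℝ)..xmax, Efun d ω β t)) :=
    tendsto_const_nhds.add (riemann hd ω hβ hx)
  have hval : Efun d ω β 1 - xmax * Efun d ω β xmax + (∫ t in (1:ℝ)..xmax, Efun d ω β t)
      = (1 / β) * (Sfun d ω β 1 - Sfun d ω β xmax) := by
    rw [integralE hd hβ hx, S_eq hd ω β 1, S_eq hd ω β xmax]
    field_simp
    ring
  rw [← hval]
  refine hmain.congr' ?_
  filter_upwards [eventually_ge_atTop 1] with N hN
  exact (telescope hd ω β xmax N hN).symm
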